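/- arXiv:2303.10417 — 2 statements merged into one kernel-verified Lean document; each statement's English description precedes it below -/
import Mathlib

section
/- Fix an integer n ≥ 1 and a Lebesgue measurable set P ⊆ [0,1] of positive Lebesgue measure. Define K* by K*_k(X) = ( ∫_P p^{q_k(X)} (1−p)^{k−q_k(X)} (2p−1) dp ) / ( ∫_P p^{q_k(X)} (1−p)^{k−q_k(X)} dp ) for each X ∈ 𝒳 and 0 ≤ k ≤ n−1. Then K* is an admissible controller (its gains lie in (−1,1) and are causal), and K* is the unique maximizer of f over all admissible controllers: for every admissible controller K with K ≠ K*, f(K) < f(K*). -/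
open MeasureTheory

/- Sample paths are `X : Fin n → Bool`, with `X i = true` meaning the `i`-th flip is heads
(`X_i = 1`) and `X i = false` meaning tails (`X_i = -1`). -/

/-- The number of heads along a sample path. -/
def numHeads {n : ℕ} (X : Fin n → Bool) : ℕ :=
  (Finset.univ.filter fun i => X i = true).card

/-- `qk k X` is the number of heads among the flips strictly before stage `k`. -/
def qk {n : ℕ} (k : Fin n) (X : Fin n → Bool) : ℕ :=
  (Finset.univ.filter fun i => i < k ∧ X i = true).card

/-- A controller is admissible if all its gains lie in `(-1,1)` and it is causal, i.e. the
stage-`k` gain depends only on the outcomes of flips `0, …, k-1`. -/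
def Admissible {n : ℕ} (K : Fin n → (Fin n → Bool) → ℝ) : Prop :=
  (∀ k X, K k X ∈ Set.Ioo (-1 : ℝ) 1) ∧
    ∀ k X Y, (∀ i, i < k → X i = Y i) → K k X = K k Y

/-- The expected logarithmic growth of controller `K` at heads-probability `p`. -/
noncomputable def ELG {n : ℕ} (K : Fin n → (Fin n → Bool) → ℝ) (p : ℝ) : ℝ :=
  (1 / (n : ℝ)) * ∑ X : Fin n → Bool,
    p ^ numHeads X * (1 - p) ^ (n - numHeads X) *
      ∑ k : Fin n, Real.log (1 + K k X * (if X k then 1 else -1))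

/-- The robust objective: expected logarithmic growth integrated over the uncertainty
set `P` for the probability of heads. -/
noncomputable def robustObj {n : ℕ} (P : Set ℝ) (K : Fin n → (Fin n → Bool) → ℝ) : ℝ :=
  ∫ p in P, ELG K p

/-- The robust optimal nonlinear controller from the main theorem. -/
noncomputable def Kstar {n : ℕ} (P : Set ℝ) (k : Fin n) (X : Fin n → Bool) : ℝ :=
  (∫ p in P, p ^ qk k X * (1 - p) ^ (k.val - qk k X) * (2 * p - 1)) /
    ∫ p in P, p ^ qk k X * (1 - p) ^ (k.val - qk k X)

/-! ### Auxiliary machinery -/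

namespace RobustCtrl

variable {n : ℕ}

/-- The key strict concavity estimate. -/
lemma keyStrict {A B κ : ℝ} (hA : 0 < A) (hB : 0 < B) (hκ1 : (-1:ℝ) < κ) (hκ2 : κ < 1)
    (hne : κ ≠ (A - B) / (A + B)) :
    A * Real.log (1 + κ) + B * Real.log (1 - κ) <
      A * Real.log (1 + (A - B) / (A + B)) + B * Real.log (1 - (A - B) / (A + B)) := by
  have hs : (0:ℝ) < A + B := by linarith
  have h1 : 1 + (A - B) / (A + B) = 2 * A / (A + B) := by field_simp; ring
  have h2 : 1 - (A - B) / (A + B) = 2 * B / (A + B) := by field_simp; ring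
  set u : ℝ := (1 + κ) * (A + B) / (2 * A) with hu_def
  set v : ℝ := (1 - κ) * (A + B) / (2 * B) with hv_def
  have h1κ : (0:ℝ) < 1 + κ := by linarith
  have h2κ : (0:ℝ) < 1 - κ := by linarith
  have hu : 0 < u := by positivity
  have hv : 0 < v := by positivity
  have hune : u ≠ 1 := by
    intro h
    apply hne
    rw [hu_def] at h; field_simp at h
    field_simp
    linarith
  have lu : Real.log u < u - 1 := Real.log_lt_sub_one_of_pos hu hune
  have lv : Real.log v ≤ v - 1 := Real.log_le_sub_one_of_pos hv
  have eu : Real.log (1 + κ) = Real.log (2 * A / (A + B)) + Real.log u := by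
    rw [← Real.log_mul (by positivity) (ne_of_gt hu)]
    congr 1
    rw [hu_def]; field_simp
  have ev : Real.log (1 - κ) = Real.log (2 * B / (A + B)) + Real.log v := by
    rw [← Real.log_mul (by positivity) (ne_of_gt hv)]
    congr 1
    rw [hv_def]; field_simp
  rw [eu, ev, h1, h2]
  have hAu : A * u = (1 + κ) * (A + B) / 2 := by rw [hu_def]; field_simp
  have hBv : B * v = (1 - κ) * (A + B) / 2 := by rw [hv_def]; field_simp
  nlinarith [mul_lt_mul_of_pos_left lu hA, mul_le_mul_of_nonneg_left lv hB.le]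

lemma keyLe {A B κ : ℝ} (hA : 0 < A) (hB : 0 < B) (hκ1 : (-1:ℝ) < κ) (hκ2 : κ < 1) :
    A * Real.log (1 + κ) + B * Real.log (1 - κ) ≤
      A * Real.log (1 + (A - B) / (A + B)) + B * Real.log (1 - (A - B) / (A + B)) := by
  rcases eq_or_ne κ ((A - B) / (A + B)) with h | h
  · rw [h]
  · exact (keyStrict hA hB hκ1 hκ2 h).le

/-! #### Product weights -/

def RW (T : Finset (Fin n)) (p : ℝ) (X : Fin n → Bool) : ℝ :=
  ∏ i ∈ T, (if X i then p else 1 - p)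

lemma flip_invol (j : Fin n) : Function.Involutive
    (fun X : Fin n → Bool => Function.update X j (!X j)) := by
  intro X; funext i
  by_cases h : i = j
  · subst h; simp
  · simp [Function.update_of_ne h]

lemma sum_flip (j : Fin n) (F : (Fin n → Bool) → ℝ) :
    ∑ X : Fin n → Bool, F (Function.update X j (!X j)) = ∑ X : Fin n → Bool, F X :=
  Fintype.sum_bijective _ (flip_invol j).bijective _ _ (fun _ => rfl)

lemma RW_update {T : Finset (Fin n)} {j : Fin n} (hj : j ∉ T) (p : ℝ) (X : Fin n → Bool)
    (b : Bool) : RW T p (Function.update X j b) = RW T p X := by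
  unfold RW
  refine Finset.prod_congr rfl fun i hi => ?_
  have : i ≠ j := fun h => hj (h ▸ hi)
  exact if_congr (by rw [Function.update_of_ne this]) rfl rfl

lemma RW_erase {T : Finset (Fin n)} {j : Fin n} (hj : j ∈ T) (p : ℝ) (X : Fin n → Bool) :
    RW T p X = (if X j then p else 1 - p) * RW (T.erase j) p X :=
  (Finset.mul_prod_erase T _ hj).symm

lemma dropOne {T : Finset (Fin n)} {j : Fin n} (hj : j ∈ T) (p : ℝ)
    (G : (Fin n → Bool) → ℝ) (hG : ∀ X b, G (Function.update X j b) = G X) :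
    ∑ X : Fin n → Bool, RW T p X * G X
      = (1/2) * ∑ X : Fin n → Bool, RW (T.erase j) p X * G X := by
  have key : ∀ X : Fin n → Bool,
      RW T p X * G X + RW T p (Function.update X j (!X j)) * G (Function.update X j (!X j))
        = RW (T.erase j) p X * G X := by
    intro X
    rw [hG, RW_erase hj p X, RW_erase hj p (Function.update X j (!X j)),
      RW_update (Finset.notMem_erase j T) p X (!X j), Function.update_self]
    cases h : X j <;> simp <;> ring
  have h2 : (2:ℝ) * ∑ X : Fin n → Bool, RW T p X * G X
      = ∑ X : Fin n → Bool, RW (T.erase j) p X * G X := by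
    rw [two_mul]
    nth_rewrite 2 [← sum_flip j (fun X => RW T p X * G X)]
    rw [← Finset.sum_add_distrib]
    exact Finset.sum_congr rfl fun X _ => key X
  linarith

lemma splitK {T : Finset (Fin n)} {k : Fin n} (hk : k ∈ T) (p : ℝ)
    (κ : (Fin n → Bool) → ℝ) (hκ : ∀ X b, κ (Function.update X k b) = κ X) :
    ∑ X : Fin n → Bool, RW T p X * Real.log (1 + κ X * (if X k then 1 else -1))
      = (1/2) * ∑ X : Fin n → Bool, RW (T.erase k) p X *
          (p * Real.log (1 + κ X) + (1 - p) * Real.log (1 - κ X)) := by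
  set G : (Fin n → Bool) → ℝ := fun X => Real.log (1 + κ X * (if X k then 1 else -1)) with hG
  have key : ∀ X : Fin n → Bool,
      RW T p X * G X + RW T p (Function.update X k (!X k)) * G (Function.update X k (!X k))
        = RW (T.erase k) p X *
          (p * Real.log (1 + κ X) + (1 - p) * Real.log (1 - κ X)) := by
    intro X
    rw [RW_erase hk p X, RW_erase hk p (Function.update X k (!X k)),
      RW_update (Finset.notMem_erase k T) p X (!X k)]
    have hGX : G (Function.update X k (!X k))
        = Real.log (1 + κ X * (if !X k then 1 else -1)) := by
      simp only [hG, hκ, Function.update_self]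
    rw [hGX]
    cases h : X k <;> simp [hG, h] <;> ring_nf
  have h2 : (2:ℝ) * ∑ X : Fin n → Bool, RW T p X * G X
      = ∑ X : Fin n → Bool, RW (T.erase k) p X *
          (p * Real.log (1 + κ X) + (1 - p) * Real.log (1 - κ X)) := by
    rw [two_mul]
    nth_rewrite 2 [← sum_flip k (fun X => RW T p X * G X)]
    rw [← Finset.sum_add_distrib]
    exact Finset.sum_congr rfl fun X _ => key X
  linarith

lemma dropMany (k : Fin n) (p : ℝ) (G : (Fin n → Bool) → ℝ)
    (hG : ∀ j : Fin n, k < j → ∀ X b, G (Function.update X j b) = G X) :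
    ∀ S : Finset (Fin n), (∀ j ∈ S, k < j) →
      ∑ X : Fin n → Bool, RW ((Finset.univ.filter (· ≤ k)) ∪ S) p X * G X
        = (1/2:ℝ)^S.card *
          ∑ X : Fin n → Bool, RW (Finset.univ.filter (· ≤ k)) p X * G X := by
  intro S
  induction S using Finset.induction_on with
  | empty => simp
  | @insert j S hj ih =>
    intro hS
    have hjk : k < j := hS j (Finset.mem_insert_self j S)
    have hjnot : j ∉ (Finset.univ.filter (· ≤ k)) ∪ S := by
      simp only [Finset.mem_union, Finset.mem_filter, Finset.mem_univ, true_and]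
      push_neg
      exact ⟨hjk, hj⟩
    have hins : (Finset.univ.filter (· ≤ k)) ∪ insert j S
        = insert j ((Finset.univ.filter (· ≤ k)) ∪ S) := by
      rw [Finset.union_insert]
    rw [hins, dropOne (Finset.mem_insert_self j _) p G (hG j hjk),
      Finset.erase_insert hjnot, ih (fun i hi => hS i (Finset.mem_insert_of_mem hi)),
      Finset.card_insert_of_notMem hj, pow_succ]
    ring

lemma erase_le_eq (k : Fin n) :
    ((Finset.univ.filter (· ≤ k)).erase k) = Finset.univ.filter (· < k) := by
  ext i
  simp [lt_iff_le_and_ne, Finset.mem_erase, and_comm]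

lemma union_le_gt (k : Fin n) :
    (Finset.univ.filter (· ≤ k)) ∪ (Finset.univ.filter (k < ·)) = Finset.univ := by
  ext i
  simp [le_or_gt]

lemma card_gt (k : Fin n) : (Finset.univ.filter (k < ·)).card = n - 1 - k.val := by
  have : (Finset.univ.filter (k < ·)) = Finset.Ioi k := by ext i; simp
  rw [this, Fin.card_Ioi]

lemma reduce (k : Fin n) (p : ℝ) (κ : (Fin n → Bool) → ℝ)
    (hκ : ∀ X Y, (∀ i, i < k → X i = Y i) → κ X = κ Y) :
    ∑ X : Fin n → Bool, RW Finset.univ p X * Real.log (1 + κ X * (if X k then 1 else -1))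
      = (1/2:ℝ)^(n - k.val) *
        ∑ X : Fin n → Bool, RW (Finset.univ.filter (· < k)) p X *
          (p * Real.log (1 + κ X) + (1 - p) * Real.log (1 - κ X)) := by
  set G : (Fin n → Bool) → ℝ := fun X => Real.log (1 + κ X * (if X k then 1 else -1)) with hGdef
  have hG : ∀ j : Fin n, k < j → ∀ X b, G (Function.update X j b) = G X := by
    intro j hjk X b
    have hkj : k ≠ j := ne_of_lt hjk
    have h1 : Function.update X j b k = X k := Function.update_of_ne hkj b X
    have h2 : κ (Function.update X j b) = κ X := by
      apply hκ
      intro i hi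
      exact Function.update_of_ne (ne_of_lt (lt_trans hi hjk)) b X
    simp only [hGdef, h1, h2]
  have hκk : ∀ X b, κ (Function.update X k b) = κ X := by
    intro X b
    apply hκ
    intro i hi
    exact Function.update_of_ne (ne_of_lt hi) b X
  have h0 := dropMany k p G hG (Finset.univ.filter (k < ·)) (fun j hj => by
    simpa using hj)
  rw [union_le_gt] at h0
  rw [h0, card_gt]
  rw [show (∑ X : Fin n → Bool, RW (Finset.univ.filter (· ≤ k)) p X * G X)
    = (1/2) * ∑ X : Fin n → Bool, RW (Finset.univ.filter (· < k)) p X *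
          (p * Real.log (1 + κ X) + (1 - p) * Real.log (1 - κ X)) from by
    rw [← erase_le_eq k]
    exact splitK (by simp) p κ hκk]
  rw [show n - k.val = (n - 1 - k.val) + 1 from by omega]
  rw [pow_succ]
  ring

/-! #### Weight formulas -/

lemma RW_eq (T : Finset (Fin n)) (p : ℝ) (X : Fin n → Bool) :
    RW T p X = p ^ (T.filter (fun i => X i = true)).card
      * (1 - p) ^ (T.filter (fun i => ¬ X i = true)).card := by
  unfold RW
  rw [← Finset.prod_filter_mul_prod_filter_not T (fun i => X i = true)]
  congr 1
  · exact Finset.prod_eq_pow_card (fun i hi => by simp [(Finset.mem_filter.mp hi).2]) ..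
  · refine Finset.prod_eq_pow_card (fun i hi => ?_) ..
    have := (Finset.mem_filter.mp hi).2
    simp only [Bool.not_eq_true] at this
    simp [this]

lemma RW_univ (p : ℝ) (X : Fin n → Bool) :
    RW Finset.univ p X = p ^ numHeads X * (1 - p) ^ (n - numHeads X) := by
  rw [RW_eq]
  have h := Finset.card_filter_add_card_filter_not
    (s := (Finset.univ : Finset (Fin n))) (p := fun i => X i = true)
  simp only [Finset.card_univ, Fintype.card_fin] at h
  have h2 : (Finset.filter (fun i => ¬X i = true) Finset.univ).card = n - numHeads X := by
    unfold numHeads; omega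
  rw [h2]; rfl

lemma card_lt_filter (k : Fin n) : (Finset.univ.filter (· < k)).card = k.val := by
  have : (Finset.univ.filter (· < k)) = Finset.Iio k := by ext i; simp
  rw [this, Fin.card_Iio]

lemma RW_prefix (k : Fin n) (p : ℝ) (X : Fin n → Bool) :
    RW (Finset.univ.filter (· < k)) p X = p ^ qk k X * (1 - p) ^ (k.val - qk k X) := by
  rw [RW_eq]
  have h1 : ((Finset.univ.filter (· < k)).filter (fun i => X i = true))
      = Finset.univ.filter (fun i => i < k ∧ X i = true) := by
    rw [Finset.filter_filter]
  have h := Finset.card_filter_add_card_filter_not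
    (s := Finset.univ.filter (· < k)) (p := fun i => X i = true)
  rw [h1, card_lt_filter] at h
  have h2 : ((Finset.univ.filter (· < k)).filter (fun i => ¬ X i = true)).card
      = k.val - qk k X := by unfold qk; omega
  rw [h1, h2]; rfl

/-! #### Integrals -/

noncomputable def pref (k : Fin n) (X : Fin n → Bool) (p : ℝ) : ℝ :=
  p ^ qk k X * (1 - p) ^ (k.val - qk k X)

noncomputable def Aint (P : Set ℝ) (k : Fin n) (X : Fin n → Bool) : ℝ :=
  ∫ p in P, pref k X p * p

noncomputable def Bint (P : Set ℝ) (k : Fin n) (X : Fin n → Bool) : ℝ :=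
  ∫ p in P, pref k X p * (1 - p)

lemma cont_pref (k : Fin n) (X : Fin n → Bool) : Continuous (pref k X) := by
  unfold pref; fun_prop

/-- The pointwise (in `p`) rewriting of `ELG`. -/
lemma ELG_eq (K : Fin n → (Fin n → Bool) → ℝ)
    (hK : ∀ k X Y, (∀ i, i < k → X i = Y i) → K k X = K k Y) (p : ℝ) :
    ELG K p = (1 / (n : ℝ)) * ∑ k : Fin n, (1/2:ℝ)^(n - k.val) *
      ∑ X : Fin n → Bool, pref k X p *
        (p * Real.log (1 + K k X) + (1 - p) * Real.log (1 - K k X)) := by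
  unfold ELG
  congr 1
  calc ∑ X : Fin n → Bool, p ^ numHeads X * (1 - p) ^ (n - numHeads X) *
        ∑ k : Fin n, Real.log (1 + K k X * (if X k then 1 else -1))
      = ∑ X : Fin n → Bool, ∑ k : Fin n,
          RW Finset.univ p X * Real.log (1 + K k X * (if X k then 1 else -1)) := by
        refine Finset.sum_congr rfl fun X _ => ?_
        rw [← RW_univ, Finset.mul_sum]
    _ = ∑ k : Fin n, ∑ X : Fin n → Bool,
          RW Finset.univ p X * Real.log (1 + K k X * (if X k then 1 else -1)) :=
        Finset.sum_comm
    _ = ∑ k : Fin n, (1/2:ℝ)^(n - k.val) *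
          ∑ X : Fin n → Bool, pref k X p *
            (p * Real.log (1 + K k X) + (1 - p) * Real.log (1 - K k X)) := by
        refine Finset.sum_congr rfl fun k _ => ?_
        rw [reduce k p (K k) (hK k)]
        congr 1
        refine Finset.sum_congr rfl fun X _ => ?_
        rw [RW_prefix]
        rfl

variable {P : Set ℝ}

lemma integrableOnP (hPsub : P ⊆ Set.Icc (0 : ℝ) 1) {f : ℝ → ℝ} (hf : Continuous f) :
    IntegrableOn f P volume :=
  (hf.integrableOn_Icc (a := (0:ℝ)) (b := 1)).mono_set hPsub

lemma integral_pref_lin (hPsub : P ⊆ Set.Icc (0 : ℝ) 1) (k : Fin n) (X : Fin n → Bool)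
    (c₁ c₂ : ℝ) :
    ∫ p in P, pref k X p * (p * c₁ + (1 - p) * c₂)
      = Aint P k X * c₁ + Bint P k X * c₂ := by
  have h1 : IntegrableOn (fun p : ℝ => pref k X p * p * c₁) P volume :=
    integrableOnP hPsub (by have := cont_pref k X; fun_prop)
  have h2 : IntegrableOn (fun p : ℝ => pref k X p * (1 - p) * c₂) P volume :=
    integrableOnP hPsub (by have := cont_pref k X; fun_prop)
  have : ∀ p : ℝ, pref k X p * (p * c₁ + (1 - p) * c₂)
      = pref k X p * p * c₁ + pref k X p * (1 - p) * c₂ := fun p => by ring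
  simp_rw [this]
  rw [integral_add h1 h2, integral_mul_const, integral_mul_const]
  rfl

lemma Aint_pos (hPmeas : MeasurableSet P) (hPsub : P ⊆ Set.Icc (0 : ℝ) 1)
    (hPpos : 0 < volume P) (k : Fin n) (X : Fin n → Bool) : 0 < Aint P k X := by
  rw [Aint, setIntegral_pos_iff_support_of_nonneg_ae]
  · refine lt_of_lt_of_le ?_ (measure_mono (show P \ {0,1} ⊆
      Function.support (fun p : ℝ => pref k X p * p) ∩ P from ?_))
    · rw [measure_diff_null (by
        have : ({0,1} : Set ℝ).Finite := (Set.finite_singleton 1).insert 0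
        exact this.measure_zero volume)]
      exact hPpos
    · rintro p ⟨hp, hp2⟩
      simp only [Set.mem_insert_iff, Set.mem_singleton_iff, not_or] at hp2
      have hicc := hPsub hp
      have h0 : 0 < p := lt_of_le_of_ne hicc.1 (Ne.symm hp2.1)
      have h1 : p < 1 := lt_of_le_of_ne hicc.2 hp2.2
      refine ⟨?_, hp⟩
      simp only [Function.mem_support]
      have : 0 < pref k X p * p := by
        unfold pref
        have : (0:ℝ) < 1 - p := by linarith
        positivity
      exact ne_of_gt this
  · refine (ae_restrict_iff' hPmeas).mpr (Filter.Eventually.of_forall fun p hp => ?_)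
    have hicc := hPsub hp
    have h0 : 0 ≤ p := hicc.1
    have h1 : 0 ≤ 1 - p := by linarith [hicc.2]
    unfold pref
    positivity
  · exact integrableOnP hPsub (by have := cont_pref k X; fun_prop)

lemma Bint_pos (hPmeas : MeasurableSet P) (hPsub : P ⊆ Set.Icc (0 : ℝ) 1)
    (hPpos : 0 < volume P) (k : Fin n) (X : Fin n → Bool) : 0 < Bint P k X := by
  rw [Bint, setIntegral_pos_iff_support_of_nonneg_ae]
  · refine lt_of_lt_of_le ?_ (measure_mono (show P \ {0,1} ⊆
      Function.support (fun p : ℝ => pref k X p * (1 - p)) ∩ P from ?_))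
    · rw [measure_diff_null (by
        have : ({0,1} : Set ℝ).Finite := (Set.finite_singleton 1).insert 0
        exact this.measure_zero volume)]
      exact hPpos
    · rintro p ⟨hp, hp2⟩
      simp only [Set.mem_insert_iff, Set.mem_singleton_iff, not_or] at hp2
      have hicc := hPsub hp
      have h0 : 0 < p := lt_of_le_of_ne hicc.1 (Ne.symm hp2.1)
      have h1 : p < 1 := lt_of_le_of_ne hicc.2 hp2.2
      refine ⟨?_, hp⟩
      simp only [Function.mem_support]
      have : 0 < pref k X p * (1 - p) := by
        unfold pref
        have : (0:ℝ) < 1 - p := by linarith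
        positivity
      exact ne_of_gt this
  · refine (ae_restrict_iff' hPmeas).mpr (Filter.Eventually.of_forall fun p hp => ?_)
    have hicc := hPsub hp
    have h0 : 0 ≤ p := hicc.1
    have h1 : 0 ≤ 1 - p := by linarith [hicc.2]
    unfold pref
    positivity
  · exact integrableOnP hPsub (by have := cont_pref k X; fun_prop)

lemma Kstar_eq (hPsub : P ⊆ Set.Icc (0 : ℝ) 1) (k : Fin n) (X : Fin n → Bool) :
    Kstar P k X = (Aint P k X - Bint P k X) / (Aint P k X + Bint P k X) := by
  have hA : IntegrableOn (fun p : ℝ => pref k X p * p) P volume :=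
    integrableOnP hPsub (by have := cont_pref k X; fun_prop)
  have hB : IntegrableOn (fun p : ℝ => pref k X p * (1 - p)) P volume :=
    integrableOnP hPsub (by have := cont_pref k X; fun_prop)
  have hnum : (∫ p in P, p ^ qk k X * (1 - p) ^ (k.val - qk k X) * (2 * p - 1))
      = Aint P k X - Bint P k X := by
    have : ∀ p : ℝ, p ^ qk k X * (1 - p) ^ (k.val - qk k X) * (2 * p - 1)
        = pref k X p * p - pref k X p * (1 - p) := fun p => by unfold pref; ring
    simp_rw [this]
    exact integral_sub hA hB
  have hden : (∫ p in P, p ^ qk k X * (1 - p) ^ (k.val - qk k X))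
      = Aint P k X + Bint P k X := by
    have : ∀ p : ℝ, p ^ qk k X * (1 - p) ^ (k.val - qk k X)
        = pref k X p * p + pref k X p * (1 - p) := fun p => by unfold pref; ring
    simp_rw [this]
    exact integral_add hA hB
  rw [Kstar, hnum, hden]

/-- Closed form of the robust objective for an admissible controller. -/
lemma robustObj_eq (hPsub : P ⊆ Set.Icc (0 : ℝ) 1) (K : Fin n → (Fin n → Bool) → ℝ)
    (hK : ∀ k X Y, (∀ i, i < k → X i = Y i) → K k X = K k Y) :
    robustObj P K = (1 / (n : ℝ)) * ∑ k : Fin n, (1/2:ℝ)^(n - k.val) *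
      ∑ X : Fin n → Bool,
        (Aint P k X * Real.log (1 + K k X) + Bint P k X * Real.log (1 - K k X)) := by
  unfold robustObj
  simp_rw [ELG_eq K hK]
  rw [integral_const_mul]
  congr 1
  rw [integral_finset_sum _ (fun k _ => by
    apply Integrable.const_mul
    apply integrable_finset_sum
    intro X _
    exact integrableOnP hPsub (by have := cont_pref k X; fun_prop))]
  refine Finset.sum_congr rfl fun k _ => ?_
  rw [integral_const_mul]
  congr 1
  rw [integral_finset_sum _ (fun X _ =>
    integrableOnP hPsub (by have := cont_pref k X; fun_prop))]
  exact Finset.sum_congr rfl fun X _ => integral_pref_lin hPsub k X _ _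

end RobustCtrl

open RobustCtrl in
/-- Main theorem: `K*` is admissible and is the unique maximizer of the robust objective
`f(K) = ∫_P ELG_K(p) dp` over all admissible controllers. -/
theorem robust_optimal_nonlinear_controller (n : ℕ) (hn : 1 ≤ n) (P : Set ℝ)
    (hPmeas : MeasurableSet P) (hPsub : P ⊆ Set.Icc (0 : ℝ) 1) (hPpos : 0 < volume P) :
    Admissible (Kstar (n := n) P) ∧
      ∀ K : Fin n → (Fin n → Bool) → ℝ, Admissible K → K ≠ Kstar (n := n) P →
        robustObj P K < robustObj P (Kstar (n := n) P) := by
  have hApos := fun (k : Fin n) (X : Fin n → Bool) => Aint_pos hPmeas hPsub hPpos k X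
  have hBpos := fun (k : Fin n) (X : Fin n → Bool) => Bint_pos hPmeas hPsub hPpos k X
  have hKs_eq := fun (k : Fin n) (X : Fin n → Bool) => Kstar_eq hPsub k X
  have hKs_mem : ∀ (k : Fin n) X, Kstar (n := n) P k X ∈ Set.Ioo (-1 : ℝ) 1 := by
    intro k X
    rw [hKs_eq k X]
    have hA := hApos k X
    have hB := hBpos k X
    have hs : (0:ℝ) < Aint P k X + Bint P k X := by linarith
    constructor
    · rw [lt_div_iff₀ hs]; linarith
    · rw [div_lt_one hs]; linarith
  have hKs_causal : ∀ (k : Fin n) X Y, (∀ i, i < k → X i = Y i) →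
      Kstar (n := n) P k X = Kstar (n := n) P k Y := by
    intro k X Y h
    have hq : qk k X = qk k Y := by
      unfold qk
      congr 1
      ext i
      simp only [Finset.mem_filter, Finset.mem_univ, true_and]
      constructor
      · rintro ⟨h1, h2⟩; exact ⟨h1, (h i h1) ▸ h2⟩
      · rintro ⟨h1, h2⟩; exact ⟨h1, (h i h1).symm ▸ h2⟩
    unfold Kstar
    rw [hq]
  have hKsAdm : Admissible (Kstar (n := n) P) := ⟨hKs_mem, hKs_causal⟩
  refine ⟨hKsAdm, fun K hK hne => ?_⟩
  rw [robustObj_eq hPsub K hK.2, robustObj_eq hPsub (Kstar (n := n) P) hKsAdm.2]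
  have hn' : (0:ℝ) < 1 / (n : ℝ) := by
    have : (0:ℝ) < (n : ℝ) := by exact_mod_cast hn
    positivity
  rw [mul_lt_mul_iff_right₀ hn']
  -- find a witness where K differs from Kstar
  obtain ⟨k₀, X₀, hne₀⟩ : ∃ k X, K k X ≠ Kstar (n := n) P k X := by
    by_contra h
    push_neg at h
    exact hne (funext fun k => funext fun X => h k X)
  have term_le : ∀ (k : Fin n) (X : Fin n → Bool),
      Aint P k X * Real.log (1 + K k X) + Bint P k X * Real.log (1 - K k X)
        ≤ Aint P k X * Real.log (1 + Kstar (n := n) P k X)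
          + Bint P k X * Real.log (1 - Kstar (n := n) P k X) := by
    intro k X
    rw [hKs_eq k X]
    exact keyLe (hApos k X) (hBpos k X) (hK.1 k X).1 (hK.1 k X).2
  have term_lt :
      Aint P k₀ X₀ * Real.log (1 + K k₀ X₀) + Bint P k₀ X₀ * Real.log (1 - K k₀ X₀)
        < Aint P k₀ X₀ * Real.log (1 + Kstar (n := n) P k₀ X₀)
          + Bint P k₀ X₀ * Real.log (1 - Kstar (n := n) P k₀ X₀) := by
    rw [hKs_eq k₀ X₀]
    refine keyStrict (hApos k₀ X₀) (hBpos k₀ X₀) (hK.1 k₀ X₀).1 (hK.1 k₀ X₀).2 ?_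
    rw [← hKs_eq k₀ X₀]
    exact hne₀
  refine Finset.sum_lt_sum (fun k _ => ?_) ⟨k₀, Finset.mem_univ k₀, ?_⟩
  · have hc : (0:ℝ) ≤ (1/2:ℝ)^(n - k.val) := by positivity
    exact mul_le_mul_of_nonneg_left (Finset.sum_le_sum fun X _ => term_le k X) hc
  · have hc : (0:ℝ) < (1/2:ℝ)^(n - k₀.val) := by positivity
    refine mul_lt_mul_of_pos_left ?_ hc
    exact Finset.sum_lt_sum (fun X _ => term_le k₀ X) ⟨X₀, Finset.mem_univ X₀, term_lt⟩
end

section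
/- Fix an integer n ≥ 2 and a Lebesgue measurable set P ⊆ [0,1] of positive Lebesgue measure. Let K* be the robust optimal controller defined by K*_k(X) = ( ∫_P p^{q_k(X)} (1−p)^{k−q_k(X)} (2p−1) dp ) / ( ∫_P p^{q_k(X)} (1−p)^{k−q_k(X)} dp ). Then for every constant c ∈ (−1,1), letting K_c denote the static linear controller with K_k(X) = c for all X and k, one has f(K*) > f(K_c). In particular, the optimal robust nonlinear controller strictly outperforms the optimal static linear controller in robust expected logarithmic growth. -/
open MeasureTheory

/-- extend a history to a full path by tails -/
def extH {n : ℕ} (k : Fin n) (Ys : {i : Fin n // i < k} → Bool) : Fin n → Bool :=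
  fun i => if h : i < k then Ys ⟨i, h⟩ else false

def qY {n : ℕ} {k : Fin n} (Ys : {i : Fin n // i < k} → Bool) : ℕ :=
  (Finset.univ.filter fun j => Ys j = true).card

lemma card_subtype_lt {n : ℕ} (k : Fin n) : Fintype.card {i : Fin n // i < k} = k.val := by
  have e : {i : Fin n // i < k} ≃ Fin k.val :=
    { toFun := fun i => ⟨i.1.1, i.2⟩
      invFun := fun j => ⟨⟨j.1, by omega⟩, by simp [Fin.lt_def]⟩
      left_inv := fun i => by ext; rfl
      right_inv := fun j => rfl }
  simp [Fintype.card_congr e]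

lemma qY_le {n : ℕ} {k : Fin n} (Ys : {i : Fin n // i < k} → Bool) : qY Ys ≤ k.val := by
  calc qY Ys ≤ Finset.univ.card := Finset.card_filter_le _ _
  _ = k.val := by rw [Finset.card_univ, card_subtype_lt]

lemma qk_extH {n : ℕ} (k : Fin n) (Ys : {i : Fin n // i < k} → Bool) :
    qk k (extH k Ys) = qY Ys := by
  unfold qk qY
  apply Finset.card_bij (fun i hi => (⟨i, (Finset.mem_filter.mp hi).2.1⟩ : {i : Fin n // i < k}))
  · intro i hi
    have h := Finset.mem_filter.mp hi
    simp only [Finset.mem_filter, Finset.mem_univ, true_and]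
    have := h.2.2
    simpa [extH, h.2.1] using this
  · intro a ha b hb hab
    simpa [Subtype.ext_iff, Fin.ext_iff] using congrArg (fun x => x.1.1) hab
  · intro b hb
    refine ⟨b.1, Finset.mem_filter.mpr ⟨Finset.mem_univ _, b.2, ?_⟩, rfl⟩
    simpa [extH, b.2] using (Finset.mem_filter.mp hb).2

lemma weight_prod {n : ℕ} (p : ℝ) (X : Fin n → Bool) :
    p ^ numHeads X * (1 - p) ^ (n - numHeads X) = ∏ i, (if X i then p else (1 - p)) := by
  rw [← Finset.prod_filter_mul_prod_filter_not Finset.univ (fun i => X i = true)]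
  have h1 : ∏ i ∈ Finset.univ.filter (fun i => X i = true), (if X i then p else (1-p)) =
      p ^ numHeads X := by
    rw [show ∏ i ∈ Finset.univ.filter (fun i => X i = true), (if X i then p else (1-p)) =
        ∏ _i ∈ Finset.univ.filter (fun i => X i = true), p from
      Finset.prod_congr rfl (fun i hi => by simp [(Finset.mem_filter.mp hi).2])]
    simp [numHeads]
  have h2 : ∏ i ∈ Finset.univ.filter (fun i => ¬ X i = true), (if X i then p else (1-p)) =
      (1-p) ^ (n - numHeads X) := by
    rw [show ∏ i ∈ Finset.univ.filter (fun i => ¬ X i = true), (if X i then p else (1-p)) =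
        ∏ _i ∈ Finset.univ.filter (fun i => ¬ X i = true), (1-p) from
      Finset.prod_congr rfl (fun i hi => by simp [(Finset.mem_filter.mp hi).2])]
    rw [Finset.prod_const]
    congr 1
    have := Finset.card_filter_add_card_filter_not (s := (Finset.univ : Finset (Fin n)))
      (fun i => X i = true)
    simp only [Finset.card_univ, Fintype.card_fin] at this
    unfold numHeads
    omega
  rw [h1, h2]

lemma histweight_prod {n : ℕ} {k : Fin n} (p : ℝ) (Ys : {i : Fin n // i < k} → Bool) :
    (∏ j : {i : Fin n // i < k}, (if Ys j then p else (1 - p))) =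
      p ^ qY Ys * (1 - p) ^ (k.val - qY Ys) := by
  rw [← Finset.prod_filter_mul_prod_filter_not Finset.univ (fun j => Ys j = true)]
  have h1 : ∏ j ∈ Finset.univ.filter (fun j => Ys j = true), (if Ys j then p else (1-p)) =
      p ^ qY Ys := by
    rw [show ∏ j ∈ Finset.univ.filter (fun j => Ys j = true), (if Ys j then p else (1-p)) =
        ∏ _j ∈ Finset.univ.filter (fun j => Ys j = true), p from
      Finset.prod_congr rfl (fun j hj => by simp [(Finset.mem_filter.mp hj).2])]
    simp [qY]
  have h2 : ∏ j ∈ Finset.univ.filter (fun j => ¬ Ys j = true), (if Ys j then p else (1-p)) =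
      (1-p) ^ (k.val - qY Ys) := by
    rw [show ∏ j ∈ Finset.univ.filter (fun j => ¬ Ys j = true), (if Ys j then p else (1-p)) =
        ∏ _j ∈ Finset.univ.filter (fun j => ¬ Ys j = true), (1-p) from
      Finset.prod_congr rfl (fun j hj => by simp [(Finset.mem_filter.mp hj).2])]
    rw [Finset.prod_const]
    congr 1
    have := Finset.card_filter_add_card_filter_not
      (s := (Finset.univ : Finset {i : Fin n // i < k})) (fun j => Ys j = true)
    rw [Finset.card_univ, card_subtype_lt] at this
    unfold qY
    omega
  rw [h1, h2]


lemma stage_identity {n : ℕ} (K : Fin n → (Fin n → Bool) → ℝ)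
    (hK : ∀ k X Y, (∀ i, i < k → X i = Y i) → K k X = K k Y) (k : Fin n) (p : ℝ) :
    ∑ X : Fin n → Bool, (∏ i, (if X i then p else (1 - p))) *
        Real.log (1 + K k X * (if X k then 1 else -1))
      = ∑ Ys : {i : Fin n // i < k} → Bool,
          (∏ j : {i : Fin n // i < k}, (if Ys j then p else (1 - p))) *
            (p * Real.log (1 + K k (extH k Ys)) + (1 - p) * Real.log (1 - K k (extH k Ys))) := by
  classical
  set e := Equiv.piEquivPiSubtypeProd (fun i : Fin n => i < k) (fun _ => Bool) with he
  rw [← Equiv.sum_comp e.symm, Fintype.sum_prod_type]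
  apply Finset.sum_congr rfl
  intro Ys _
  -- notation
  set κ := K k (extH k Ys) with hκ
  have hKval : ∀ Zs : {i : Fin n // ¬ i < k} → Bool, K k (e.symm (Ys, Zs)) = κ := by
    intro Zs
    apply hK
    intro i hi
    simp [he, Equiv.piEquivPiSubtypeProd_symm_apply, extH, hi]
  have hkmem : ¬ (k < k) := lt_irrefl k
  set j0 : {i : Fin n // ¬ i < k} := ⟨k, hkmem⟩ with hj0
  have hXk : ∀ Zs : {i : Fin n // ¬ i < k} → Bool, (e.symm (Ys, Zs)) k = Zs j0 := by
    intro Zs; simp [he, Equiv.piEquivPiSubtypeProd_symm_apply, hkmem, hj0]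
  have hsplit : ∀ Zs : {i : Fin n // ¬ i < k} → Bool,
      (∏ i, (if (e.symm (Ys, Zs)) i then p else (1-p))) =
        (∏ j : {i : Fin n // i < k}, (if Ys j then p else (1-p))) *
          (∏ j : {i : Fin n // ¬ i < k}, (if Zs j then p else (1-p))) := by
    intro Zs
    rw [← Fintype.prod_subtype_mul_prod_subtype (fun i : Fin n => i < k)
      (fun i => if (e.symm (Ys, Zs)) i then p else (1-p))]
    congr 1
    · apply Finset.prod_congr rfl; intro j _
      simp [he, Equiv.piEquivPiSubtypeProd_symm_apply, j.2]
    · apply Finset.prod_congr rfl; intro j _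
      simp [he, Equiv.piEquivPiSubtypeProd_symm_apply, j.2]
  -- rewrite each summand
  have hterm : ∀ Zs : {i : Fin n // ¬ i < k} → Bool,
      (∏ i, (if (e.symm (Ys, Zs)) i then p else (1-p))) *
          Real.log (1 + K k (e.symm (Ys, Zs)) * (if (e.symm (Ys, Zs)) k then 1 else -1)) =
        (∏ j : {i : Fin n // i < k}, (if Ys j then p else (1-p))) *
          ∏ j : {i : Fin n // ¬ i < k},
            ((if Zs j then p else (1-p)) *
              (if j = j0 then (if Zs j then Real.log (1+κ) else Real.log (1-κ)) else 1)) := by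
    intro Zs
    rw [hsplit Zs, hKval Zs, hXk Zs, Finset.prod_mul_distrib]
    have : (∏ j : {i : Fin n // ¬ i < k},
        (if j = j0 then (if Zs j then Real.log (1+κ) else Real.log (1-κ)) else 1)) =
        (if Zs j0 then Real.log (1+κ) else Real.log (1-κ)) := by
      rw [Finset.prod_ite_eq' Finset.univ j0
        (fun j => if Zs j then Real.log (1+κ) else Real.log (1-κ))]
      simp
    rw [this]
    cases hb : Zs j0
    · simp only [hb, Bool.false_eq_true, if_false]
      rw [show (1:ℝ) + κ * -1 = 1 - κ by ring]; ring
    · simp only [hb, if_true]; ring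
  rw [Finset.sum_congr rfl (fun Zs _ => hterm Zs), ← Finset.mul_sum]
  congr 1
  -- now compute the sum over Zs of the product
  have := Finset.prod_univ_sum (fun _ : {i : Fin n // ¬ i < k} => (Finset.univ : Finset Bool))
    (fun j b => (if b then p else (1-p)) *
      (if j = j0 then (if b then Real.log (1+κ) else Real.log (1-κ)) else 1))
  rw [Fintype.piFinset_univ] at this
  rw [← this]
  have hfac : ∀ j : {i : Fin n // ¬ i < k},
      (∑ b : Bool, (if b then p else (1-p)) *
        (if j = j0 then (if b then Real.log (1+κ) else Real.log (1-κ)) else 1)) =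
      (if j = j0 then p * Real.log (1+κ) + (1-p) * Real.log (1-κ) else 1) := by
    intro j
    by_cases h : j = j0 <;> simp [h, Fintype.sum_bool] <;> ring
  rw [Finset.prod_congr rfl (fun j _ => hfac j), Finset.prod_ite_eq' Finset.univ j0 _]
  simp

section
variable {P : Set ℝ}

lemma integrableOnP (hPsub : P ⊆ Set.Icc (0:ℝ) 1) {f : ℝ → ℝ} (hf : Continuous f) :
    IntegrableOn f P volume :=
  (hf.integrableOn_Icc (a := 0) (b := 1)).mono_set hPsub

lemma pos_int (hPmeas : MeasurableSet P) (hPsub : P ⊆ Set.Icc (0:ℝ) 1)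
    (hPpos : 0 < volume P) (a b : ℕ) : 0 < ∫ p in P, p^a * (1-p)^b := by
  set f : ℝ → ℝ := fun p => p^a * (1-p)^b with hf
  have hcont : Continuous f := by fun_prop
  have hnn : 0 ≤ᶠ[ae (volume.restrict P)] f := by
    apply ae_restrict_of_forall_mem hPmeas
    intro p hp
    have h := hPsub hp
    have h0 : (0:ℝ) ≤ p := h.1
    have h1 : p ≤ 1 := h.2
    have : (0:ℝ) ≤ 1 - p := by linarith
    positivity
  rw [setIntegral_pos_iff_support_of_nonneg_ae hnn (integrableOnP hPsub hcont)]
  have hsub : P \ {0, 1} ⊆ Function.support f ∩ P := by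
    intro p hp
    obtain ⟨hpP, hpn⟩ := hp
    have h := hPsub hpP
    have h0 : 0 < p := lt_of_le_of_ne h.1 (by intro h'; exact hpn (by simp [← h']))
    have h1 : p < 1 := lt_of_le_of_ne h.2 (by intro h'; exact hpn (by simp [h']))
    refine ⟨?_, hpP⟩
    have : 0 < f p := by
      have : (0:ℝ) < 1 - p := by linarith
      positivity
    exact ne_of_gt this
  calc (0:ENNReal) < volume P := hPpos
    _ = volume (P \ ({0,1} : Set ℝ)) := by
        rw [measure_diff_null]
        exact (Set.Finite.insert 0 (Set.finite_singleton 1)).measure_zero _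
    _ ≤ volume (Function.support f ∩ P) := measure_mono hsub

lemma cell_core (A B : ℝ) (hA : 0 < A) (hB : 0 < B) (c : ℝ) (h1 : -1 < c) (h2 : c < 1) :
    (A * Real.log (1+c) + B * Real.log (1-c) ≤
      A * Real.log (1+(A-B)/(A+B)) + B * Real.log (1-(A-B)/(A+B))) ∧
    (c ≠ (A-B)/(A+B) →
      A * Real.log (1+c) + B * Real.log (1-c) <
        A * Real.log (1+(A-B)/(A+B)) + B * Real.log (1-(A-B)/(A+B))) := by
  have hAB : 0 < A + B := by linarith
  set x : ℝ := (A-B)/(A+B) with hx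
  have h1x : 1 + x = 2*A/(A+B) := by
    rw [hx, eq_div_iff hAB.ne', add_mul, div_mul_cancel₀ _ hAB.ne']; ring
  have h2x : 1 - x = 2*B/(A+B) := by
    rw [hx, eq_div_iff hAB.ne', sub_mul, div_mul_cancel₀ _ hAB.ne']; ring
  have h1xpos : 0 < 1 + x := by rw [h1x]; positivity
  have h2xpos : 0 < 1 - x := by rw [h2x]; positivity
  have h1cpos : 0 < 1 + c := by linarith
  have h2cpos : 0 < 1 - c := by linarith
  set t1 : ℝ := (1+c)/(1+x) with ht1
  set t2 : ℝ := (1-c)/(1-x) with ht2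
  have ht1pos : 0 < t1 := by positivity
  have ht2pos : 0 < t2 := by positivity
  have hlog1 : Real.log t1 = Real.log (1+c) - Real.log (1+x) :=
    Real.log_div (ne_of_gt h1cpos) (ne_of_gt h1xpos)
  have hlog2 : Real.log t2 = Real.log (1-c) - Real.log (1-x) :=
    Real.log_div (ne_of_gt h2cpos) (ne_of_gt h2xpos)
  have hkey : A * (t1 - 1) + B * (t2 - 1) = 0 := by
    rw [ht1, ht2, h1x, h2x]
    field_simp
    ring
  have hdiff : A * Real.log (1+c) + B * Real.log (1-c) -
      (A * Real.log (1+x) + B * Real.log (1-x)) = A * Real.log t1 + B * Real.log t2 := by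
    rw [hlog1, hlog2]; ring
  constructor
  · have hb1 : Real.log t1 ≤ t1 - 1 := Real.log_le_sub_one_of_pos ht1pos
    have hb2 : Real.log t2 ≤ t2 - 1 := Real.log_le_sub_one_of_pos ht2pos
    nlinarith
  · intro hne
    have ht1ne : t1 ≠ 1 := by
      intro h
      apply hne
      rw [ht1, div_eq_one_iff_eq (ne_of_gt h1xpos)] at h
      linarith
    have hb1 : Real.log t1 < t1 - 1 := Real.log_lt_sub_one_of_pos ht1pos ht1ne
    have hb2 : Real.log t2 ≤ t2 - 1 := Real.log_le_sub_one_of_pos ht2pos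
    nlinarith

end

lemma ELG_eq {n : ℕ} (K : Fin n → (Fin n → Bool) → ℝ)
    (hK : ∀ k X Y, (∀ i, i < k → X i = Y i) → K k X = K k Y) (p : ℝ) :
    ELG K p = (1 / (n : ℝ)) * ∑ k : Fin n, ∑ Ys : {i : Fin n // i < k} → Bool,
      p ^ qY Ys * (1-p) ^ (k.val - qY Ys) *
        (p * Real.log (1 + K k (extH k Ys)) + (1-p) * Real.log (1 - K k (extH k Ys))) := by
  unfold ELG
  congr 1
  calc ∑ X : Fin n → Bool, p ^ numHeads X * (1 - p) ^ (n - numHeads X) *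
        ∑ k : Fin n, Real.log (1 + K k X * (if X k then 1 else -1))
      = ∑ X : Fin n → Bool, ∑ k : Fin n, (∏ i, (if X i then p else (1-p))) *
          Real.log (1 + K k X * (if X k then 1 else -1)) := by
        apply Finset.sum_congr rfl
        intro X _
        rw [weight_prod, Finset.mul_sum]
    _ = ∑ k : Fin n, ∑ X : Fin n → Bool, (∏ i, (if X i then p else (1-p))) *
          Real.log (1 + K k X * (if X k then 1 else -1)) := Finset.sum_comm
    _ = _ := by
        apply Finset.sum_congr rfl
        intro k _
        rw [stage_identity K hK k p]
        apply Finset.sum_congr rfl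
        intro Ys _
        rw [histweight_prod]

lemma robustObj_eq {n : ℕ} {P : Set ℝ} (hPmeas : MeasurableSet P)
    (hPsub : P ⊆ Set.Icc (0:ℝ) 1) (K : Fin n → (Fin n → Bool) → ℝ)
    (hK : ∀ k X Y, (∀ i, i < k → X i = Y i) → K k X = K k Y) :
    robustObj P K = (1 / (n : ℝ)) * ∑ k : Fin n, ∑ Ys : {i : Fin n // i < k} → Bool,
      ((∫ p in P, p ^ (qY Ys + 1) * (1-p) ^ (k.val - qY Ys)) *
          Real.log (1 + K k (extH k Ys)) +
        (∫ p in P, p ^ qY Ys * (1-p) ^ (k.val - qY Ys + 1)) *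
          Real.log (1 - K k (extH k Ys))) := by
  unfold robustObj
  have hfun : (fun p => ELG K p) = fun p =>
      (1 / (n : ℝ)) * ∑ k : Fin n, ∑ Ys : {i : Fin n // i < k} → Bool,
        p ^ qY Ys * (1-p) ^ (k.val - qY Ys) *
          (p * Real.log (1 + K k (extH k Ys)) + (1-p) * Real.log (1 - K k (extH k Ys))) := by
    funext p; exact ELG_eq K hK p
  rw [hfun, integral_const_mul]
  congr 1
  have hint : ∀ (k : Fin n) (Ys : {i : Fin n // i < k} → Bool),
      IntegrableOn (fun p => p ^ qY Ys * (1-p) ^ (k.val - qY Ys) *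
        (p * Real.log (1 + K k (extH k Ys)) + (1-p) * Real.log (1 - K k (extH k Ys))))
        P volume := fun k Ys => integrableOnP hPsub (by fun_prop)
  rw [integral_finset_sum Finset.univ
    (fun k _ => integrable_finset_sum Finset.univ (fun Ys _ => hint k Ys))]
  apply Finset.sum_congr rfl
  intro k _
  rw [integral_finset_sum Finset.univ (fun Ys _ => hint k Ys)]
  apply Finset.sum_congr rfl
  intro Ys _
  set q := qY Ys with hq
  set m := k.val - qY Ys with hm
  set la := Real.log (1 + K k (extH k Ys)) with hla
  set lb := Real.log (1 - K k (extH k Ys)) with hlb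
  have hpt : ∀ p : ℝ, p ^ q * (1-p) ^ m * (p * la + (1-p) * lb) =
      la * (p ^ (q+1) * (1-p) ^ m) + lb * (p ^ q * (1-p) ^ (m+1)) := by
    intro p; ring
  calc ∫ p in P, p ^ q * (1-p) ^ m * (p * la + (1-p) * lb)
      = ∫ p in P, (la * (p ^ (q+1) * (1-p) ^ m) + lb * (p ^ q * (1-p) ^ (m+1))) := by
        simp_rw [hpt]
    _ = (∫ p in P, la * (p ^ (q+1) * (1-p) ^ m)) + ∫ p in P, lb * (p ^ q * (1-p) ^ (m+1)) := by
        apply integral_add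
        · exact integrableOnP hPsub (by fun_prop)
        · exact integrableOnP hPsub (by fun_prop)
    _ = la * (∫ p in P, p ^ (q+1) * (1-p) ^ m) + lb * ∫ p in P, p ^ q * (1-p) ^ (m+1) := by
        rw [integral_const_mul, integral_const_mul]
    _ = _ := by ring

lemma var_pos {P : Set ℝ} (hPmeas : MeasurableSet P) (hPsub : P ⊆ Set.Icc (0:ℝ) 1)
    (hPpos : 0 < volume P) (hM0 : 0 < ∫ p in P, (1:ℝ)) :
    (∫ p in P, p^1*(1-p)^1) * (∫ p in P, p^1*(1-p)^1) <
      (∫ p in P, p^2*(1-p)^0) * (∫ p in P, p^0*(1-p)^2) := by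
  set M0 := ∫ p in P, (1:ℝ) with hM0d
  set M1 := ∫ p in P, p with hM1d
  set M2 := ∫ p in P, p^2 with hM2d
  have i0 : IntegrableOn (fun _ : ℝ => (1:ℝ)) P volume := integrableOnP hPsub (by fun_prop)
  have i1 : IntegrableOn (fun p : ℝ => p) P volume := integrableOnP hPsub (by fun_prop)
  have i2 : IntegrableOn (fun p : ℝ => p^2) P volume := integrableOnP hPsub (by fun_prop)
  set m := M1 / M0 with hmd
  have hVexp : (∫ p in P, (p - m)^2) = M2 - 2*m*M1 + m^2*M0 := by
    have hpt : ∀ p : ℝ, (p - m)^2 = p^2 - (2*m)*p + m^2*1 := by intro p; ring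
    simp_rw [hpt]
    rw [integral_add (by
        apply Integrable.sub i2
        exact Integrable.const_mul i1 (2*m)) (Integrable.const_mul i0 (m^2)),
      integral_sub i2 (Integrable.const_mul i1 (2*m)), integral_const_mul, integral_const_mul]
  have hVpos : 0 < ∫ p in P, (p - m)^2 := by
    have hnn : 0 ≤ᶠ[ae (volume.restrict P)] fun p : ℝ => (p - m)^2 :=
      ae_restrict_of_forall_mem hPmeas (fun p _ => sq_nonneg _)
    rw [setIntegral_pos_iff_support_of_nonneg_ae hnn (integrableOnP hPsub (by fun_prop))]
    have hsub : P \ {m} ⊆ Function.support (fun p : ℝ => (p - m)^2) ∩ P := by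
      intro p hp
      refine ⟨?_, hp.1⟩
      have : p ≠ m := by simpa using hp.2
      simp [Function.mem_support, sub_eq_zero, this]
    calc (0:ENNReal) < volume P := hPpos
      _ = volume (P \ ({m} : Set ℝ)) := by
          rw [measure_diff_null (by simp)]
      _ ≤ _ := measure_mono hsub
  have hkey : M1 * M1 < M0 * M2 := by
    have h := mul_pos hM0 hVpos
    rw [hVexp] at h
    have hm : m * M0 = M1 := by rw [hmd]; exact div_mul_cancel₀ _ hM0.ne'
    nlinarith [h, hm]
  have e1 : (∫ p in P, p^1*(1-p)^1) = M1 - M2 := by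
    have hpt : ∀ p : ℝ, p^1*(1-p)^1 = p - p^2 := by intro p; ring
    simp_rw [hpt]
    rw [integral_sub i1 i2]
  have e2 : (∫ p in P, p^2*(1-p)^0) = M2 := by
    have hpt : ∀ p : ℝ, p^2*(1-p)^0 = p^2 := by intro p; ring
    simp_rw [hpt]
    exact hM2d.symm
  have e3 : (∫ p in P, p^0*(1-p)^2) = M0 - 2*M1 + M2 := by
    have hpt : ∀ p : ℝ, p^0*(1-p)^2 = 1 - (2:ℝ)*p + p^2 := by intro p; ring
    simp_rw [hpt]
    rw [integral_add (by
        apply Integrable.sub i0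
        exact Integrable.const_mul i1 2) i2, integral_sub i0 (Integrable.const_mul i1 2),
      integral_const_mul]
  rw [e1, e2, e3]
  nlinarith [hkey]

lemma qk_congr {n : ℕ} (k : Fin n) (X Y : Fin n → Bool) (h : ∀ i, i < k → X i = Y i) :
    qk k X = qk k Y := by
  unfold qk
  congr 1
  apply Finset.filter_congr
  intro i _
  constructor
  · rintro ⟨hik, hX⟩; exact ⟨hik, by rw [← h i hik]; exact hX⟩
  · rintro ⟨hik, hY⟩; exact ⟨hik, by rw [h i hik]; exact hY⟩

lemma Kstar_causal {n : ℕ} (P : Set ℝ) : ∀ (k : Fin n) X Y, (∀ i, i < k → X i = Y i) →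
    Kstar P k X = Kstar P k Y := by
  intro k X Y h
  unfold Kstar
  rw [qk_congr k X Y h]

lemma Kstar_val {n : ℕ} {P : Set ℝ} (hPsub : P ⊆ Set.Icc (0:ℝ) 1) (k : Fin n)
    (Ys : {i : Fin n // i < k} → Bool) :
    Kstar P k (extH k Ys) =
      ((∫ p in P, p ^ (qY Ys + 1) * (1-p) ^ (k.val - qY Ys)) -
        ∫ p in P, p ^ qY Ys * (1-p) ^ (k.val - qY Ys + 1)) /
      ((∫ p in P, p ^ (qY Ys + 1) * (1-p) ^ (k.val - qY Ys)) +
        ∫ p in P, p ^ qY Ys * (1-p) ^ (k.val - qY Ys + 1)) := by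
  unfold Kstar
  rw [qk_extH]
  set q := qY Ys with hq
  set m := k.val - qY Ys with hm
  have iA : IntegrableOn (fun p : ℝ => p ^ (q+1) * (1-p) ^ m) P volume :=
    integrableOnP hPsub (by fun_prop)
  have iB : IntegrableOn (fun p : ℝ => p ^ q * (1-p) ^ (m+1)) P volume :=
    integrableOnP hPsub (by fun_prop)
  have hnum : (∫ p in P, p ^ q * (1-p) ^ m * (2*p - 1)) =
      (∫ p in P, p ^ (q+1) * (1-p) ^ m) - ∫ p in P, p ^ q * (1-p) ^ (m+1) := by
    have hpt : ∀ p : ℝ, p ^ q * (1-p) ^ m * (2*p - 1) =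
        p ^ (q+1) * (1-p) ^ m - p ^ q * (1-p) ^ (m+1) := by intro p; ring
    simp_rw [hpt]
    rw [integral_sub iA iB]
  have hden : (∫ p in P, p ^ q * (1-p) ^ m) =
      (∫ p in P, p ^ (q+1) * (1-p) ^ m) + ∫ p in P, p ^ q * (1-p) ^ (m+1) := by
    have hpt : ∀ p : ℝ, p ^ q * (1-p) ^ m =
        p ^ (q+1) * (1-p) ^ m + p ^ q * (1-p) ^ (m+1) := by intro p; ring
    simp_rw [hpt]
    rw [integral_add iA iB]
  rw [hnum, hden]

/-- Corollary: for `n ≥ 2` flips, the robust optimal nonlinear controller `K*` strictly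
outperforms every static linear controller (constant gain `c ∈ (-1,1)`) in robust expected
logarithmic growth; in particular it strictly outperforms the optimal static linear
controller. -/
theorem nonlinear_beats_static_linear (n : ℕ) (hn : 2 ≤ n) (P : Set ℝ)
    (hPmeas : MeasurableSet P) (hPsub : P ⊆ Set.Icc (0 : ℝ) 1) (hPpos : 0 < volume P)
    (c : ℝ) (hc : c ∈ Set.Ioo (-1 : ℝ) 1) :
    robustObj P (fun (_ : Fin n) (_ : Fin n → Bool) => c) <
      robustObj P (Kstar (n := n) P) := by
  obtain ⟨hc1, hc2⟩ := hc
  have hKc : ∀ (k : Fin n) (X Y : Fin n → Bool), (∀ i, i < k → X i = Y i) →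
      (fun (_ : Fin n) (_ : Fin n → Bool) => c) k X =
      (fun (_ : Fin n) (_ : Fin n → Bool) => c) k Y := fun _ _ _ _ => rfl
  rw [robustObj_eq hPmeas hPsub _ hKc, robustObj_eq hPmeas hPsub _ (Kstar_causal P)]
  have hnR : (0:ℝ) < (n:ℝ) := by exact_mod_cast Nat.lt_of_lt_of_le Nat.zero_lt_two hn
  apply mul_lt_mul_of_pos_left _ (by positivity)
  have hA : ∀ (k : Fin n) (Ys : {i : Fin n // i < k} → Bool),
      0 < ∫ p in P, p ^ (qY Ys + 1) * (1-p) ^ (k.val - qY Ys) :=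
    fun k Ys => pos_int hPmeas hPsub hPpos _ _
  have hB : ∀ (k : Fin n) (Ys : {i : Fin n // i < k} → Bool),
      0 < ∫ p in P, p ^ qY Ys * (1-p) ^ (k.val - qY Ys + 1) :=
    fun k Ys => pos_int hPmeas hPsub hPpos _ _
  have hle : ∀ (k : Fin n) (Ys : {i : Fin n // i < k} → Bool),
      (∫ p in P, p ^ (qY Ys + 1) * (1-p) ^ (k.val - qY Ys)) * Real.log (1 + c) +
        (∫ p in P, p ^ qY Ys * (1-p) ^ (k.val - qY Ys + 1)) * Real.log (1 - c) ≤
      (∫ p in P, p ^ (qY Ys + 1) * (1-p) ^ (k.val - qY Ys)) *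
          Real.log (1 + Kstar P k (extH k Ys)) +
        (∫ p in P, p ^ qY Ys * (1-p) ^ (k.val - qY Ys + 1)) *
          Real.log (1 - Kstar P k (extH k Ys)) := by
    intro k Ys
    rw [Kstar_val hPsub]
    exact (cell_core _ _ (hA k Ys) (hB k Ys) c hc1 hc2).1
  apply Finset.sum_lt_sum
  · intro k _
    exact Finset.sum_le_sum (fun Ys _ => hle k Ys)
  · have hk1lt : 1 < n := by omega
    refine ⟨⟨1, hk1lt⟩, Finset.mem_univ _, ?_⟩
    set k1 : Fin n := ⟨1, hk1lt⟩ with hk1d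
    have hk1v : k1.val = 1 := rfl
    set Yst : {i : Fin n // i < k1} → Bool := fun _ => true with hYstd
    set Ysf : {i : Fin n // i < k1} → Bool := fun _ => false with hYsfd
    have hqt : qY Yst = 1 := by
      unfold qY
      have h : Finset.univ.filter (fun j : {i : Fin n // i < k1} => Yst j = true) =
          Finset.univ := by simp [hYstd]
      rw [h, Finset.card_univ, card_subtype_lt, hk1v]
    have hqf : qY Ysf = 0 := by
      unfold qY; simp [hYsfd]
    have eAt : (∫ p in P, p ^ (qY Yst + 1) * (1-p) ^ (k1.val - qY Yst)) =
        ∫ p in P, p^2*(1-p)^0 := by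
      congr 1; funext p; rw [hqt, hk1v]
    have eBt : (∫ p in P, p ^ qY Yst * (1-p) ^ (k1.val - qY Yst + 1)) =
        ∫ p in P, p^1*(1-p)^1 := by
      congr 1; funext p; rw [hqt, hk1v]
    have eAf : (∫ p in P, p ^ (qY Ysf + 1) * (1-p) ^ (k1.val - qY Ysf)) =
        ∫ p in P, p^1*(1-p)^1 := by
      congr 1; funext p; rw [hqf, hk1v]
    have eBf : (∫ p in P, p ^ qY Ysf * (1-p) ^ (k1.val - qY Ysf + 1)) =
        ∫ p in P, p^0*(1-p)^2 := by
      congr 1; funext p; rw [hqf, hk1v]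
    set At := ∫ p in P, (p:ℝ)^2*(1-p)^0 with hAtd
    set Bt := ∫ p in P, (p:ℝ)^1*(1-p)^1 with hBtd
    set Bf := ∫ p in P, (p:ℝ)^0*(1-p)^2 with hBfd
    have hAtpos : 0 < At := pos_int hPmeas hPsub hPpos 2 0
    have hBtpos : 0 < Bt := pos_int hPmeas hPsub hPpos 1 1
    have hBfpos : 0 < Bf := pos_int hPmeas hPsub hPpos 0 2
    have hvar : Bt * Bt < At * Bf :=
      var_pos hPmeas hPsub hPpos (by simpa using pos_int hPmeas hPsub hPpos 0 0)
    have hneq : (At - Bt)/(At + Bt) ≠ (Bt - Bf)/(Bt + Bf) := by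
      intro h
      rw [div_eq_div_iff (by linarith) (by linarith)] at h
      nlinarith
    apply Finset.sum_lt_sum (fun Ys _ => hle k1 Ys)
    by_cases hcx : c = (Bt - Bf)/(Bt + Bf)
    · refine ⟨Yst, Finset.mem_univ _, ?_⟩
      rw [Kstar_val hPsub, eAt, eBt]
      exact (cell_core At Bt hAtpos hBtpos c hc1 hc2).2 (by rw [hcx]; exact Ne.symm hneq)
    · refine ⟨Ysf, Finset.mem_univ _, ?_⟩
      rw [Kstar_val hPsub, eAf, eBf]
      exact (cell_core Bt Bf hBtpos hBfpos c hc1 hc2).2 hcx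
end
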